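/- arXiv:2605.23628 — 2 statements merged into one kernel-verified Lean document; each statement's English description precedes it below -/
import Mathlib

section
/- Under upper-median aggregation, the instance-level robustness satisfies: if C ≥ Δ_med then k_median = Δ_med, and if C < Δ_med then k_median = +∞. Here N is the number of datasets on which φ⁰(A₁,D) ≥ τ, C is the number of datasets with φ⁰(A₁,D) < τ ≤ φ⁰(A₁,D) + G_D, τ is the highest upper median among competing models, and Δ_med = max(0, m − h + 1 − N) with h = ⌊m/2⌋ + 1. -/
open Finset
open scoped Classical

lemma med_key {m : ℕ} (h : ℕ) (hm : 0 < m) (hh : h = m / 2 + 1) (τ : ℝ) (f : Fin m → ℝ) :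
    τ ≤ ((Multiset.map f (univ : Finset (Fin m)).val).sort (· ≤ ·)).getD (h - 1) 0 ↔
      m - h + 1 ≤ (univ.filter fun D => τ ≤ f D).card := by
  have hhm : h ≤ m := by omega
  set l := ((Multiset.map f (univ : Finset (Fin m)).val).sort (· ≤ ·)) with hl
  have hlen : l.length = m := by
    simp [hl, Multiset.length_sort]
  have hsort : l.Pairwise (· ≤ ·) := Multiset.pairwise_sort _ _
  have hidx : h - 1 < l.length := by omega
  have hgetD : l.getD (h - 1) 0 = l[h-1] := by
    rw [List.getD_eq_getElem?_getD, List.getElem?_eq_getElem hidx, Option.getD_some]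
  have hcount : l.countP (fun x => decide (τ ≤ x)) = (univ.filter fun D => τ ≤ f D).card := by
    have hcoe : (l : Multiset ℝ) = Multiset.map f (univ : Finset (Fin m)).val :=
      Multiset.sort_eq _ _
    have h2 := congrArg (Multiset.countP (fun x => τ ≤ x)) hcoe
    rw [Multiset.coe_countP, Multiset.countP_map] at h2
    rw [h2]
    rfl
  rw [hgetD, ← hcount]
  constructor
  · intro hle
    have hsplit := l.take_append_drop (h - 1)
    have hdrop : (l.drop (h - 1)).countP (fun x => decide (τ ≤ x)) = (l.drop (h-1)).length := by
      rw [List.countP_eq_length]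
      intro a ha
      rw [List.mem_drop_iff_getElem] at ha
      obtain ⟨i, hi, rfl⟩ := ha
      have : l[h-1] ≤ l[(h-1)+i] := by
        have := hsort.rel_get_of_le (a := ⟨h-1, hidx⟩) (b := ⟨(h-1)+i, by omega⟩)
          (by simp)
        simpa using this
      simp only [decide_eq_true_eq]
      linarith
    calc m - h + 1 = (l.drop (h-1)).length := by rw [List.length_drop]; omega
      _ = (l.drop (h - 1)).countP (fun x => decide (τ ≤ x)) := hdrop.symm
      _ ≤ l.countP (fun x => decide (τ ≤ x)) := by
          conv_rhs => rw [← hsplit]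
          rw [List.countP_append]; omega
  · intro hc
    by_contra hlt
    push_neg at hlt
    have htake : (l.take h).countP (fun x => decide (τ ≤ x)) = 0 := by
      rw [List.countP_eq_zero]
      intro a ha
      rw [List.mem_take_iff_getElem] at ha
      obtain ⟨i, hi, rfl⟩ := ha
      have : l[i] ≤ l[h-1] := by
        have := hsort.rel_get_of_le (a := ⟨i, by omega⟩) (b := ⟨h-1, hidx⟩)
          (by simp; omega)
        simpa using this
      simp only [decide_eq_true_eq, not_le]
      linarith
    have hsplit := l.take_append_drop h
    have hcle : l.countP (fun x => decide (τ ≤ x)) ≤ m - h := by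
      conv_lhs => rw [← hsplit]
      rw [List.countP_append, htake]
      have := List.countP_le_length (p := fun x => decide (τ ≤ x)) (l := l.drop h)
      rw [List.length_drop, hlen] at this
      omega
    omega

/-- robustness of upper-median aggregation. The upper median of a score
vector is the `h`-th smallest value (`h = ⌊m/2⌋ + 1`), obtained from the sorted list of
scores. -/
theorem stmt_3 {𝒜 : Type*} [Fintype 𝒜] (A₁ : 𝒜) (m : ℕ) (hm : 0 < m)
    (φ0 : 𝒜 → Fin m → ℝ) (hφ0 : ∀ A D, 0 ≤ φ0 A D ∧ φ0 A D ≤ 1)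
    (G : Fin m → ℝ) (hG : ∀ D, 0 ≤ G D ∧ G D ≤ 1 - φ0 A₁ D)
    (h : ℕ) (hh : h = m / 2 + 1)
    -- the upper median: the (h-1)-indexed entry of the increasingly sorted list of scores
    (med : (Fin m → ℝ) → ℝ)
    (hmed : ∀ f : Fin m → ℝ,
      med f = ((Multiset.map f (univ : Finset (Fin m)).val).sort (· ≤ ·)).getD (h - 1) 0)
    -- the highest upper median among competing models
    (hcomp : ((univ : Finset 𝒜).erase A₁).Nonempty)
    (τ : ℝ) (hτ : τ = (univ.erase A₁).sup' hcomp (fun A => med (φ0 A)))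
    -- post-training scores of the target model after training on `S`
    (φT : Finset (Fin m) → Fin m → ℝ)
    (hφT : ∀ S D, φT S D = if D ∈ S then φ0 A₁ D + G D else φ0 A₁ D)
    (N C Δmed : ℕ)
    (hN : N = Set.ncard {D : Fin m | τ ≤ φ0 A₁ D})
    (hC : C = Set.ncard {D : Fin m | φ0 A₁ D < τ ∧ τ ≤ φ0 A₁ D + G D})
    (hΔ : Δmed = (m - h + 1) - N) :
    (Δmed ≤ C →
      sInf {n : ℕ∞ | ∃ S : Finset (Fin m), (S.card : ℕ∞) = n ∧ τ ≤ med (φT S)}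
        = (Δmed : ℕ∞)) ∧
    (C < Δmed →
      sInf {n : ℕ∞ | ∃ S : Finset (Fin m), (S.card : ℕ∞) = n ∧ τ ≤ med (φT S)} = ⊤) := by
  set Nfin : Finset (Fin m) := univ.filter (fun D => τ ≤ φ0 A₁ D) with hNfin
  set Cfin : Finset (Fin m) := univ.filter (fun D => φ0 A₁ D < τ ∧ τ ≤ φ0 A₁ D + G D) with hCfin
  have hNcard : N = Nfin.card := by
    rw [hN, Set.ncard_eq_toFinset_card', Set.toFinset_setOf]
  have hCcard : C = Cfin.card := by
    rw [hC, Set.ncard_eq_toFinset_card', Set.toFinset_setOf]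
  -- counting lemma
  have hcount : ∀ S : Finset (Fin m),
      (univ.filter fun D => τ ≤ φT S D) = Nfin ∪ (S ∩ Cfin) := by
    intro S
    ext D
    simp only [mem_filter, mem_univ, true_and, hφT S D, Finset.mem_union, Finset.mem_inter,
      hNfin, hCfin]
    by_cases hDS : D ∈ S
    · simp only [hDS, if_true, true_and]
      constructor
      · intro hle
        by_cases h0 : τ ≤ φ0 A₁ D
        · exact Or.inl h0
        · exact Or.inr ⟨lt_of_not_ge h0, hle⟩
      · rintro (h0 | ⟨_, h1⟩)
        · have := (hG D).1; linarith
        · exact h1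
    · simp [hDS]
  have hdisj : ∀ S : Finset (Fin m), Disjoint Nfin (S ∩ Cfin) := by
    intro S
    rw [Finset.disjoint_left]
    intro D hD hD2
    simp only [hNfin, mem_filter, mem_univ, true_and] at hD
    simp only [hCfin, Finset.mem_inter, mem_filter, mem_univ, true_and] at hD2
    linarith [hD2.2.1]
  -- equivalence
  have hequiv : ∀ S : Finset (Fin m), (τ ≤ med (φT S)) ↔ Δmed ≤ (S ∩ Cfin).card := by
    intro S
    rw [hmed, med_key h hm hh τ (φT S), hcount S,
      Finset.card_union_of_disjoint (hdisj S)]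
    omega
  constructor
  · intro hle
    have hle' : Δmed ≤ Cfin.card := by omega
    obtain ⟨S, hSsub, hScard⟩ := Finset.exists_subset_card_eq hle'
    have hSint : S ∩ Cfin = S := Finset.inter_eq_left.mpr hSsub
    apply le_antisymm
    · apply sInf_le
      exact ⟨S, by rw [hScard], (hequiv S).mpr (by rw [hSint, hScard])⟩
    · apply le_sInf
      rintro n ⟨S, rfl, hcond⟩
      have h1 := (hequiv S).mp hcond
      have h2 : (S ∩ Cfin).card ≤ S.card := Finset.card_le_card (Finset.inter_subset_left)
      exact_mod_cast le_trans h1 h2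
  · intro hlt
    have : {n : ℕ∞ | ∃ S : Finset (Fin m), (S.card : ℕ∞) = n ∧ τ ≤ med (φT S)} = ∅ := by
      rw [Set.eq_empty_iff_forall_notMem]
      rintro n ⟨S, _, hcond⟩
      have h1 := (hequiv S).mp hcond
      have h2 : (S ∩ Cfin).card ≤ Cfin.card := Finset.card_le_card (Finset.inter_subset_right)
      omega
    rw [this, sInf_empty]
end

section
/- Under strict dataset rankings (each dataset induces a strict total order on the n models), the ranking by mean win rate coincides with the ranking by Borda score: for all models A, A', w(φ,A) ≥ w(φ,A') if and only if BordaScore(A) ≥ BordaScore(A'), where BordaScore(A) = Σ_D (n − rank_D(A)) with rank_D(A) ∈ {1,...,n} the position of A in the strict order of dataset D. -/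
open Finset
open scoped Classical

/-- under strict dataset rankings, mean win rate and Borda score induce the
same ranking of models. `rank_D(A) = |{A' : φ(A',D) ≥ φ(A,D)}|` is the position of `A`
in the strict order of dataset `D` (the top model has rank 1). -/
theorem stmt_14 {𝒜 : Type*} [Fintype 𝒜] (n m : ℕ)
    (hn : n = Fintype.card 𝒜) (hn1 : 1 ≤ n) (hm : 1 ≤ m)
    (φ : 𝒜 → Fin m → ℝ)
    (hstrict : ∀ D : Fin m, Function.Injective (fun A => φ A D))
    (wD : Fin m → 𝒜 → ℝ)
    (hwD : ∀ D A, wD D A = (1 / (n : ℝ)) * Set.ncard {A' : 𝒜 | φ A' D ≤ φ A D})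
    (w : 𝒜 → ℝ) (hw : ∀ A, w A = (1 / (m : ℝ)) * ∑ D, wD D A)
    (rank : Fin m → 𝒜 → ℕ)
    (hrank : ∀ D A, rank D A = Set.ncard {A' : 𝒜 | φ A D ≤ φ A' D})
    (borda : 𝒜 → ℕ) (hborda : ∀ A, borda A = ∑ D, (n - rank D A)) :
    ∀ A A' : 𝒜, w A' ≤ w A ↔ borda A' ≤ borda A := by
  -- key counting identity
  have key : ∀ (D : Fin m) (A : 𝒜),
      Set.ncard {A' : 𝒜 | φ A' D ≤ φ A D} + rank D A = n + 1 := by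
    intro D A
    rw [hrank]
    have hu : ({A' : 𝒜 | φ A' D ≤ φ A D} ∪ {A' : 𝒜 | φ A D ≤ φ A' D}) = Set.univ := by
      ext x; simp [le_total]
    have hi : ({A' : 𝒜 | φ A' D ≤ φ A D} ∩ {A' : 𝒜 | φ A D ≤ φ A' D}) = {A} := by
      ext x
      simp only [Set.mem_inter_iff, Set.mem_setOf_eq, Set.mem_singleton_iff]
      constructor
      · rintro ⟨h1, h2⟩
        exact hstrict D (le_antisymm h1 h2)
      · rintro rfl; exact ⟨le_rfl, le_rfl⟩
    have := Set.ncard_union_add_ncard_inter {A' : 𝒜 | φ A' D ≤ φ A D}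
      {A' : 𝒜 | φ A D ≤ φ A' D} (Set.toFinite _) (Set.toFinite _)
    rw [hu, hi, Set.ncard_univ, Set.ncard_singleton, Nat.card_eq_fintype_card, ← hn] at this
    omega
  have rank_le : ∀ (D : Fin m) (A : 𝒜), rank D A ≤ n := by
    intro D A
    have h1 : 0 < Set.ncard {A' : 𝒜 | φ A' D ≤ φ A D} :=
      (Set.ncard_pos (Set.toFinite _)).mpr ⟨A, by simp⟩
    have := key D A
    omega
  -- w A = (borda A + m) / (n * m)
  have hwval : ∀ A : 𝒜, w A = ((borda A : ℝ) + m) / (n * m) := by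
    intro A
    have hsum : ∑ D : Fin m, Set.ncard {A' : 𝒜 | φ A' D ≤ φ A D}
        = borda A + m := by
      rw [hborda]
      calc ∑ D : Fin m, Set.ncard {A' : 𝒜 | φ A' D ≤ φ A D}
          = ∑ D : Fin m, (n - rank D A + 1) := by
            apply Finset.sum_congr rfl
            intro D _
            have := key D A; have := rank_le D A; omega
        _ = (∑ D : Fin m, (n - rank D A)) + m := by
            rw [Finset.sum_add_distrib]; simp [Finset.card_univ]
    have hn0 : (n : ℝ) ≠ 0 := by positivity
    have hm0 : (m : ℝ) ≠ 0 := by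
      have : (0:ℝ) < m := by exact_mod_cast hm
      linarith
    rw [hw]
    have : ∑ D, wD D A = (1 / (n : ℝ)) * ((borda A : ℝ) + m) := by
      calc ∑ D, wD D A = ∑ D, (1 / (n : ℝ)) * (Set.ncard {A' : 𝒜 | φ A' D ≤ φ A D} : ℝ) := by
            apply Finset.sum_congr rfl; intro D _; rw [hwD]
        _ = (1 / (n : ℝ)) * ∑ D, (Set.ncard {A' : 𝒜 | φ A' D ≤ φ A D} : ℝ) := by
            rw [Finset.mul_sum]
        _ = (1 / (n : ℝ)) * ((borda A : ℝ) + m) := by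
            congr 1
            rw [← Nat.cast_sum, hsum]
            push_cast; ring
    rw [this]; ring
  intro A A'
  rw [hwval, hwval]
  have hnm : (0:ℝ) < n * m := by
    have h1 : (0:ℝ) < n := by exact_mod_cast hn1
    have h2 : (0:ℝ) < m := by exact_mod_cast hm
    positivity
  rw [div_le_div_iff_of_pos_right hnm]
  constructor
  · intro h
    exact_mod_cast (by linarith : (borda A' : ℝ) ≤ borda A)
  · intro h
    have : (borda A' : ℝ) ≤ borda A := by exact_mod_cast h
    linarith
end
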